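/- Let γ : (0,∞) → ℝ³ be the conical loxodrome γ(s) = (s/4)·(cos m(s), √3, sin m(s)) with m(s) = 2√3·log(s/4), with unit principal normal N(s) = γ''(s)/‖γ''(s)‖. Then ⟨γ(s)/‖γ(s)‖, N(s)⟩ = -√3/√13 for all s > 0. -/

import Mathlib

open Real

noncomputable section Lox

private def mm (t : ℝ) : ℝ := 2 * Real.sqrt 3 * Real.log (t / 4)

private def ff (t : ℝ) : EuclideanSpace ℝ (Fin 3) :=
  !₂[t / 4 * Real.cos (mm t), t / 4 * Real.sqrt 3, t / 4 * Real.sin (mm t)]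

private def vv (t : ℝ) : EuclideanSpace ℝ (Fin 3) :=
  !₂[1/4 * Real.cos (mm t) - Real.sqrt 3 / 2 * Real.sin (mm t),
    Real.sqrt 3 / 4,
    1/4 * Real.sin (mm t) + Real.sqrt 3 / 2 * Real.cos (mm t)]

private def ww (t : ℝ) : EuclideanSpace ℝ (Fin 3) :=
  !₂[-(Real.sqrt 3 / (2*t)) * Real.sin (mm t) - 3 / t * Real.cos (mm t),
    0,
    Real.sqrt 3 / (2*t) * Real.cos (mm t) - 3 / t * Real.sin (mm t)]

private lemma hasDerivAt_euclidean {f : ℝ → EuclideanSpace ℝ (Fin 3)}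
    {f' : EuclideanSpace ℝ (Fin 3)} {x : ℝ}
    (h : ∀ i, HasDerivAt (fun t => f t i) (f' i) x) : HasDerivAt f f' x := by
  have hg : HasDerivAt (fun t => (EuclideanSpace.equiv (Fin 3) ℝ) (f t))
      ((EuclideanSpace.equiv (Fin 3) ℝ) f') x := hasDerivAt_pi.2 h
  have := ((EuclideanSpace.equiv (Fin 3) ℝ).symm.toContinuousLinearMap.hasFDerivAt.comp_hasDerivAt
    x hg)
  simpa [Function.comp_def] using this

private lemma hmm (t : ℝ) (ht : 0 < t) : HasDerivAt mm (2 * Real.sqrt 3 / t) t := by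
  have h4 : HasDerivAt (fun x : ℝ => x / 4) (1/4) t := by
    simpa using (hasDerivAt_id t).div_const 4
  have hlog := (Real.hasDerivAt_log (by positivity : t / 4 ≠ 0)).comp t h4
  have := hlog.const_mul (2 * Real.sqrt 3)
  refine this.congr_deriv (Eq.symm ?_)
  field_simp

private lemma hff (t : ℝ) (ht : 0 < t) : HasDerivAt ff (vv t) t := by
  have ht' : t ≠ 0 := ne_of_gt ht
  have hm := hmm t ht
  apply hasDerivAt_euclidean
  have hcos : HasDerivAt (fun u => Real.cos (mm u)) (-Real.sin (mm t) * (2 * Real.sqrt 3 / t)) t :=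
    (Real.hasDerivAt_cos (mm t)).comp t hm
  have hsin : HasDerivAt (fun u => Real.sin (mm u)) (Real.cos (mm t) * (2 * Real.sqrt 3 / t)) t :=
    (Real.hasDerivAt_sin (mm t)).comp t hm
  have h4 : HasDerivAt (fun x : ℝ => x / 4) (1/4) t := by
    simpa using (hasDerivAt_id t).div_const 4
  intro i
  fin_cases i
  · have key : HasDerivAt (fun u => u / 4 * Real.cos (mm u))
        (1/4 * Real.cos (mm t) - Real.sqrt 3 / 2 * Real.sin (mm t)) t := by
      have := h4.mul hcos
      refine this.congr_deriv (Eq.symm ?_)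
      field_simp
      ring
    simpa [ff, vv] using key
  · have key : HasDerivAt (fun u : ℝ => u / 4 * Real.sqrt 3) (Real.sqrt 3 / 4) t := by
      have := h4.mul_const (Real.sqrt 3)
      refine this.congr_deriv (Eq.symm ?_)
      ring
    simpa [ff, vv] using key
  · have key : HasDerivAt (fun u => u / 4 * Real.sin (mm u))
        (1/4 * Real.sin (mm t) + Real.sqrt 3 / 2 * Real.cos (mm t)) t := by
      have := h4.mul hsin
      refine this.congr_deriv (Eq.symm ?_)
      field_simp
      ring
    simpa [ff, vv] using key

private lemma hvv (t : ℝ) (ht : 0 < t) : HasDerivAt vv (ww t) t := by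
  have ht' : t ≠ 0 := ne_of_gt ht
  have hm := hmm t ht
  have h3 : Real.sqrt 3 * Real.sqrt 3 = 3 := Real.mul_self_sqrt (by norm_num)
  apply hasDerivAt_euclidean
  have hcos : HasDerivAt (fun u => Real.cos (mm u)) (-Real.sin (mm t) * (2 * Real.sqrt 3 / t)) t :=
    (Real.hasDerivAt_cos (mm t)).comp t hm
  have hsin : HasDerivAt (fun u => Real.sin (mm u)) (Real.cos (mm t) * (2 * Real.sqrt 3 / t)) t :=
    (Real.hasDerivAt_sin (mm t)).comp t hm
  intro i
  fin_cases i
  · have key : HasDerivAt (fun u => 1/4 * Real.cos (mm u) - Real.sqrt 3 / 2 * Real.sin (mm u))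
        (-(Real.sqrt 3 / (2*t)) * Real.sin (mm t) - 3 / t * Real.cos (mm t)) t := by
      have := (hcos.const_mul (1/4 : ℝ)).sub (hsin.const_mul (Real.sqrt 3 / 2))
      refine this.congr_deriv (Eq.symm ?_)
      field_simp
      linear_combination (8 * Real.cos (mm t)) * h3
    simpa [vv, ww] using key
  · have key : HasDerivAt (fun _ : ℝ => Real.sqrt 3 / 4) (0:ℝ) t := hasDerivAt_const t _
    simpa [vv, ww] using key
  · have key : HasDerivAt (fun u => 1/4 * Real.sin (mm u) + Real.sqrt 3 / 2 * Real.cos (mm u))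
        (Real.sqrt 3 / (2*t) * Real.cos (mm t) - 3 / t * Real.sin (mm t)) t := by
      have := (hsin.const_mul (1/4 : ℝ)).add (hcos.const_mul (Real.sqrt 3 / 2))
      refine this.congr_deriv (Eq.symm ?_)
      field_simp
      linear_combination (8 * Real.sin (mm t)) * h3
    simpa [vv, ww] using key

end Lox

/-- Along the conical loxodrome the radial unit vector field makes the constant
product `-√3/√13` with the unit principal normal. -/
theorem loxodrome_normal_component (γ : ℝ → EuclideanSpace ℝ (Fin 3))
    (hγ0 : ∀ s : ℝ, γ s 0 = s / 4 * Real.cos (2 * Real.sqrt 3 * Real.log (s / 4)))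
    (hγ1 : ∀ s : ℝ, γ s 1 = s / 4 * Real.sqrt 3)
    (hγ2 : ∀ s : ℝ, γ s 2 = s / 4 * Real.sin (2 * Real.sqrt 3 * Real.log (s / 4))) :
    ∀ s : ℝ, 0 < s →
      (inner ℝ ((‖γ s‖)⁻¹ • γ s)
        ((‖deriv (deriv γ) s‖)⁻¹ • deriv (deriv γ) s) : ℝ)
        = -(Real.sqrt 3 / Real.sqrt 13) := by
  have hγf : γ = ff := by
    funext t
    ext i
    fin_cases i
    · simpa [ff, mm] using hγ0 t
    · simpa [ff, mm] using hγ1 t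
    · simpa [ff, mm] using hγ2 t
  subst hγf
  intro s hs
  have hs' : s ≠ 0 := ne_of_gt hs
  have hd1 : ∀ t ∈ Set.Ioi (0:ℝ), deriv ff t = vv t := fun t ht => (hff t ht).deriv
  have hev : deriv ff =ᶠ[nhds s] vv :=
    Filter.eventuallyEq_of_mem (Ioi_mem_nhds hs) hd1
  have hd2 : deriv (deriv ff) s = ww s := by
    rw [hev.deriv_eq]
    exact (hvv s hs).deriv
  rw [hd2]
  have h3 : Real.sqrt 3 * Real.sqrt 3 = 3 := Real.mul_self_sqrt (by norm_num)
  have h13 : Real.sqrt 13 * Real.sqrt 13 = 13 := Real.mul_self_sqrt (by norm_num)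
  have h3p : (0:ℝ) < Real.sqrt 3 := Real.sqrt_pos.2 (by norm_num)
  have h13p : (0:ℝ) < Real.sqrt 13 := Real.sqrt_pos.2 (by norm_num)
  have h39 : Real.sqrt 39 = Real.sqrt 3 * Real.sqrt 13 := by
    rw [show (39:ℝ) = 3 * 13 by norm_num, Real.sqrt_mul (by norm_num)]
  have h39' : Real.sqrt 39 * Real.sqrt 39 = 39 := Real.mul_self_sqrt (by norm_num)
  have hsc := Real.sin_sq_add_cos_sq (mm s)
  have hnf : ‖ff s‖ = s / 2 := by
    rw [EuclideanSpace.norm_eq]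
    rw [show ∑ i, ‖ff s i‖^2 = (s/2)^2 by
      simp only [ff, Fin.sum_univ_three, Real.norm_eq_abs, sq_abs,
        Matrix.cons_val_zero, Matrix.cons_val_one, Matrix.head_cons,
        Matrix.cons_val_two, Matrix.tail_cons]
      nlinarith [hsc, h3]]
    exact Real.sqrt_sq (by positivity)
  have hnw : ‖ww s‖ = Real.sqrt 39 / (2 * s) := by
    rw [EuclideanSpace.norm_eq]
    rw [show ∑ i, ‖ww s i‖^2 = (Real.sqrt 39 / (2*s))^2 by
      simp only [ww, Fin.sum_univ_three, Real.norm_eq_abs, sq_abs,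
        Matrix.cons_val_zero, Matrix.cons_val_one, Matrix.head_cons,
        Matrix.cons_val_two, Matrix.tail_cons]
      field_simp
      linear_combination (Real.sin (mm s)^2 + Real.cos (mm s)^2) * h3 + 39 * hsc - h39']
    exact Real.sqrt_sq (by positivity)
  have hip : (inner ℝ (ff s) (ww s) : ℝ) = -(3/4) := by
    simp only [PiLp.inner_apply, RCLike.inner_apply, conj_trivial, Fin.sum_univ_three,
      ff, ww, Matrix.cons_val_zero, Matrix.cons_val_one, Matrix.head_cons,
      Matrix.cons_val_two, Matrix.tail_cons]
    field_simp
    linear_combination (-6:ℝ) * hsc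
  rw [real_inner_smul_left, real_inner_smul_right, hip, hnf, hnw, h39]
  field_simp
  linear_combination 4 * h3
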